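/- Let α > 0 and define a = −√((√7−1)/24)·α^{1/2}, b = √((√7+3)/8)·α^{1/2}, and s_lin = (2/(3√6))·(2+√7)·√(√7−1)·α^{3/2}. For t ∈ ℝ set ν = a + i·t and f(t) = Re( −ν⁴ − α·ν² + s_lin·ν ). Then f(t) ≤ 0 for all t ∈ ℝ, with equality if and only if t = b or t = −b. -/

import Mathlib

/-- Along the vertical line Re ν = a = Re ν_lin in the complex plane,
the temporal growth rate f(t) = Re(−ν⁴ − αν² + s_lin ν), ν = a + it, is nonpositive
and vanishes exactly at t = ±b, where b = Im ν_lin. -/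
theorem marginal_stability_line (α : ℝ) (hα : 0 < α)
    (a b s_lin : ℝ)
    (ha : a = -(Real.sqrt ((Real.sqrt 7 - 1) / 24)) * Real.sqrt α)
    (hb : b = Real.sqrt ((Real.sqrt 7 + 3) / 8) * Real.sqrt α)
    (hs : s_lin = (2 / (3 * Real.sqrt 6)) * (2 + Real.sqrt 7) *
      Real.sqrt (Real.sqrt 7 - 1) * α ^ ((3 : ℝ) / 2))
    (f : ℝ → ℝ)
    (hf : ∀ t : ℝ, f t =
      (-((a : ℂ) + Complex.I * (t : ℂ)) ^ 4 - (α : ℂ) * ((a : ℂ) + Complex.I * (t : ℂ)) ^ 2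
        + (s_lin : ℂ) * ((a : ℂ) + Complex.I * (t : ℂ))).re) :
    ∀ t : ℝ, f t ≤ 0 ∧ (f t = 0 ↔ t = b ∨ t = -b) := by
  have h7 : Real.sqrt 7 ^ 2 = 7 := Real.sq_sqrt (by norm_num)
  have h7ge : (1:ℝ) ≤ Real.sqrt 7 := by nlinarith [Real.sqrt_nonneg 7]
  have hA : Real.sqrt α ^ 2 = α := Real.sq_sqrt hα.le
  have ha2 : a ^ 2 = (Real.sqrt 7 - 1) / 24 * α := by
    rw [ha, mul_pow, neg_pow,
      Real.sq_sqrt (by linarith : (0:ℝ) ≤ (Real.sqrt 7 - 1)/24), hA]; ring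
  have hb2 : b ^ 2 = (Real.sqrt 7 + 3) / 8 * α := by
    rw [hb, mul_pow, Real.sq_sqrt (by positivity : (0:ℝ) ≤ (Real.sqrt 7 + 3)/8), hA]
  have hrpow : α ^ ((3:ℝ)/2) = Real.sqrt α ^ 3 := by
    rw [show ((3:ℝ)/2) = (1/2)*3 by norm_num, Real.rpow_mul hα.le,
      ← Real.sqrt_eq_rpow, ← Real.rpow_natCast (Real.sqrt α) 3]
    norm_num
  have h6 : Real.sqrt 6 * Real.sqrt 6 = 6 := Real.mul_self_sqrt (by norm_num)
  have h6ne : Real.sqrt 6 ≠ 0 := by positivity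
  have h24 : Real.sqrt ((Real.sqrt 7 - 1)/24)
      = Real.sqrt (Real.sqrt 7 - 1) / (2 * Real.sqrt 6) := by
    rw [Real.sqrt_div (by linarith),
      show (24:ℝ) = 2^2*6 by norm_num, Real.sqrt_mul (by positivity), Real.sqrt_sq (by norm_num)]
  have hq : Real.sqrt (Real.sqrt 7 - 1) * Real.sqrt (Real.sqrt 7 - 1) = Real.sqrt 7 - 1 :=
    Real.mul_self_sqrt (by linarith)
  have hsa : s_lin * a = -((Real.sqrt 7 + 5)/18) * α^2 := by
    rw [hs, ha, h24, hrpow]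
    field_simp
    linear_combination (-(18*Real.sqrt 7+36)*Real.sqrt α^4) * hq
      + (-18*α^2) * h7
      + (-(18*Real.sqrt 7+36)*(Real.sqrt 7 - 1)*(Real.sqrt α^2 + α)) * hA
      + ((3*Real.sqrt 7+15)*α^2) * h6
  have key : ∀ t : ℝ, f t = -((t^2 - b^2)^2) := by
    intro t
    have hre : (-((a : ℂ) + Complex.I * (t : ℂ)) ^ 4
        - (α : ℂ) * ((a : ℂ) + Complex.I * (t : ℂ)) ^ 2
        + (s_lin : ℂ) * ((a : ℂ) + Complex.I * (t : ℂ))).re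
        = -(a^4 - 6*a^2*t^2 + t^4) - α*(a^2 - t^2) + s_lin * a := by
      simp [pow_succ, Complex.add_re, Complex.mul_re, Complex.mul_im, Complex.add_im]
      ring
    rw [hf t, hre, show a^4 = (a^2)^2 by ring, ha2, hb2, hsa]
    linear_combination (α^2/72) * h7
  intro t
  rw [key t]
  refine ⟨neg_nonpos.mpr (sq_nonneg _), ?_⟩
  constructor
  · intro h
    have ht2 : t^2 = b^2 := by nlinarith [sq_nonneg (t^2 - b^2)]
    have : (t - b) * (t + b) = 0 := by nlinarith
    rcases mul_eq_zero.mp this with h' | h'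
    · left; linarith
    · right; linarith
  · rintro (rfl | rfl) <;> ring
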